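/- Define the constant C_𝓛 = ( (1+αL)^{N−1} α ρ + (ρ/L)(1+αL)^N ((1+αL)^{N−1} − 1) ) (1+αL)^N and the meta objective gradient ∇𝓛(w) = ∫_I Gᵢ(w) dμ(i). Then for every w, u ∈ ℝ^d, ‖∇𝓛(w) − ∇𝓛(u)‖ ≤ ( (1+αL)^{2N} L + C_𝓛 ∫_I ‖∇lᵢ(w)‖ dμ(i) ) ‖w − u‖. -/

import Mathlib

open MeasureTheory

noncomputable def innerPath {d : ℕ} (α : ℝ) (l : EuclideanSpace ℝ (Fin d) → ℝ) :
    ℕ → EuclideanSpace ℝ (Fin d) → EuclideanSpace ℝ (Fin d)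
  | 0, w => w
  | j + 1, w => innerPath α l j w - α • gradient l (innerPath α l j w)

noncomputable def hessProd {d : ℕ} (α : ℝ) (N : ℕ)
    (lS : EuclideanSpace ℝ (Fin d) → ℝ) (w : EuclideanSpace ℝ (Fin d)) :
    EuclideanSpace ℝ (Fin d) →L[ℝ] EuclideanSpace ℝ (Fin d) :=
  ((List.range N).map fun j =>
    ContinuousLinearMap.id ℝ (EuclideanSpace ℝ (Fin d)) -
      α • fderiv ℝ (gradient lS) (innerPath α lS j w)).prod

noncomputable def metaGrad {d : ℕ} (α : ℝ) (N : ℕ)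
    (lS lT : EuclideanSpace ℝ (Fin d) → ℝ) (w : EuclideanSpace ℝ (Fin d)) :
    EuclideanSpace ℝ (Fin d) :=
  hessProd α N lS w (gradient lT (innerPath α lS N w))

section Aux

variable {d : ℕ} {α L ρ : ℝ} {f : EuclideanSpace ℝ (Fin d) → ℝ}

/-- The path is Lipschitz in the initial point. -/
lemma innerPath_lip (hα : 0 < α) (hL : 0 < L)
    (hgrad : ∀ w u, ‖gradient f w - gradient f u‖ ≤ L * ‖w - u‖)
    (w u : EuclideanSpace ℝ (Fin d)) :
    ∀ j, ‖innerPath α f j w - innerPath α f j u‖ ≤ (1 + α * L) ^ j * ‖w - u‖ := by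
  intro j
  induction j with
  | zero => simp [innerPath]
  | succ j ih =>
    have key : innerPath α f (j+1) w - innerPath α f (j+1) u =
        (innerPath α f j w - innerPath α f j u) -
          α • (gradient f (innerPath α f j w) - gradient f (innerPath α f j u)) := by
      simp only [innerPath, smul_sub]; abel
    calc ‖innerPath α f (j+1) w - innerPath α f (j+1) u‖
        ≤ ‖innerPath α f j w - innerPath α f j u‖ +
            ‖α • (gradient f (innerPath α f j w) - gradient f (innerPath α f j u))‖ := by
          rw [key]; exact norm_sub_le _ _
      _ ≤ ‖innerPath α f j w - innerPath α f j u‖ +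
            α * (L * ‖innerPath α f j w - innerPath α f j u‖) := by
          rw [norm_smul, Real.norm_eq_abs, abs_of_pos hα]
          gcongr
          exact hgrad _ _
      _ = (1 + α * L) * ‖innerPath α f j w - innerPath α f j u‖ := by ring
      _ ≤ (1 + α * L) * ((1 + α * L) ^ j * ‖w - u‖) := by
          gcongr
      _ = (1 + α * L) ^ (j+1) * ‖w - u‖ := by ring

/-- Gradient growth along the path. -/
lemma grad_path_le (hα : 0 < α) (hL : 0 < L)
    (hgrad : ∀ w u, ‖gradient f w - gradient f u‖ ≤ L * ‖w - u‖)
    (w : EuclideanSpace ℝ (Fin d)) :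
    ∀ j, ‖gradient f (innerPath α f j w)‖ ≤ (1 + α * L) ^ j * ‖gradient f w‖ := by
  intro j
  induction j with
  | zero => simp [innerPath]
  | succ j ih =>
    have key : innerPath α f (j+1) w - innerPath α f j w
        = - (α • gradient f (innerPath α f j w)) := by
      simp only [innerPath]; abel
    calc ‖gradient f (innerPath α f (j+1) w)‖
        ≤ ‖gradient f (innerPath α f j w)‖ +
          ‖gradient f (innerPath α f (j+1) w) - gradient f (innerPath α f j w)‖ := by
          have := norm_add_le (gradient f (innerPath α f j w))
            (gradient f (innerPath α f (j+1) w) - gradient f (innerPath α f j w))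
          simpa using this
      _ ≤ ‖gradient f (innerPath α f j w)‖ +
            L * ‖innerPath α f (j+1) w - innerPath α f j w‖ := by
          gcongr; exact hgrad _ _
      _ = (1 + α * L) * ‖gradient f (innerPath α f j w)‖ := by
          rw [key, norm_neg, norm_smul, Real.norm_eq_abs, abs_of_pos hα]; ring
      _ ≤ (1 + α * L) * ((1 + α * L) ^ j * ‖gradient f w‖) := by
          gcongr
      _ = (1 + α * L) ^ (j+1) * ‖gradient f w‖ := by ring

/-- The Hessian (as fderiv of the gradient) has norm bounded by `L`. -/
lemma hess_norm_le (hL : 0 < L)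
    (hgrad : ∀ w u, ‖gradient f w - gradient f u‖ ≤ L * ‖w - u‖)
    (x : EuclideanSpace ℝ (Fin d)) :
    ‖fderiv ℝ (gradient f) x‖ ≤ L := by
  refine norm_fderiv_le_of_lip' ℝ hL.le ?_
  exact Filter.Eventually.of_forall fun y => hgrad y x

lemma factor_norm_le (hα : 0 < α) (hL : 0 < L)
    (hgrad : ∀ w u, ‖gradient f w - gradient f u‖ ≤ L * ‖w - u‖)
    (x : EuclideanSpace ℝ (Fin d)) :
    ‖ContinuousLinearMap.id ℝ (EuclideanSpace ℝ (Fin d)) -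
      α • fderiv ℝ (gradient f) x‖ ≤ 1 + α * L := by
  calc ‖ContinuousLinearMap.id ℝ (EuclideanSpace ℝ (Fin d)) -
        α • fderiv ℝ (gradient f) x‖
      ≤ ‖ContinuousLinearMap.id ℝ (EuclideanSpace ℝ (Fin d))‖ +
        ‖α • fderiv ℝ (gradient f) x‖ := norm_sub_le _ _
    _ ≤ 1 + α * L := by
        rw [norm_smul, Real.norm_eq_abs, abs_of_pos hα]
        gcongr
        · exact ContinuousLinearMap.norm_id_le
        · exact hess_norm_le hL hgrad x

lemma hessProd_norm_le (hα : 0 < α) (hL : 0 < L)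
    (hgrad : ∀ w u, ‖gradient f w - gradient f u‖ ≤ L * ‖w - u‖)
    (w : EuclideanSpace ℝ (Fin d)) :
    ∀ N, ‖hessProd α N f w‖ ≤ (1 + α * L) ^ N := by
  intro N
  induction N with
  | zero =>
    simp only [hessProd, List.range_zero, List.map_nil, List.prod_nil, pow_zero]
    exact ContinuousLinearMap.norm_id_le
  | succ N ih =>
    have : hessProd α (N+1) f w = hessProd α N f w *
        (ContinuousLinearMap.id ℝ (EuclideanSpace ℝ (Fin d)) -
          α • fderiv ℝ (gradient f) (innerPath α f N w)) := by
      simp [hessProd, List.range_succ]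
    rw [this, pow_succ]
    refine le_trans (norm_mul_le _ _) ?_
    have h2 := factor_norm_le (f := f) hα hL hgrad (innerPath α f N w)
    have h0 : (0:ℝ) ≤ 1 + α * L := by positivity
    exact mul_le_mul ih h2 (norm_nonneg _) (by positivity)

end Aux

lemma mul_sub_mul_decomp {R : Type*} [Ring R] (a b c e : R) :
    a * c - b * e = a * (c - e) + (a - b) * e := by noncomm_ring

section Aux2

set_option maxHeartbeats 800000

variable {d : ℕ} {α L ρ : ℝ} {f : EuclideanSpace ℝ (Fin d) → ℝ}

lemma hessProd_sub_le (hα : 0 < α) (hL : 0 < L) (hρ : 0 < ρ)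
    (hgrad : ∀ w u, ‖gradient f w - gradient f u‖ ≤ L * ‖w - u‖)
    (hhess : ∀ w u, ‖fderiv ℝ (gradient f) w - fderiv ℝ (gradient f) u‖ ≤ ρ * ‖w - u‖)
    (w u : EuclideanSpace ℝ (Fin d)) :
    ∀ N, ‖hessProd α N f w - hessProd α N f u‖ ≤
      (1 + α * L) ^ (N - 1) *
        (∑ j ∈ Finset.range N, α * ρ * (1 + α * L) ^ j) * ‖w - u‖ := by
  have h0 : (0:ℝ) ≤ 1 + α * L := by positivity
  intro N
  induction N with
  | zero =>
    simp only [hessProd, List.range_zero, List.map_nil, List.prod_nil, sub_self, norm_zero,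
      Finset.range_zero, Finset.sum_empty, mul_zero, zero_mul]
    exact le_rfl
  | succ N ih =>
    have hsplit : ∀ x, hessProd α (N+1) f x = hessProd α N f x *
        (ContinuousLinearMap.id ℝ (EuclideanSpace ℝ (Fin d)) -
          α • fderiv ℝ (gradient f) (innerPath α f N x)) := by
      intro x; simp [hessProd, List.range_succ]
    set Aw := ContinuousLinearMap.id ℝ (EuclideanSpace ℝ (Fin d)) -
        α • fderiv ℝ (gradient f) (innerPath α f N w) with hAw
    set Au := ContinuousLinearMap.id ℝ (EuclideanSpace ℝ (Fin d)) -
        α • fderiv ℝ (gradient f) (innerPath α f N u) with hAu'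
    set Pw := hessProd α N f w
    set Pu := hessProd α N f u
    set S := ∑ j ∈ Finset.range N, α * ρ * (1 + α * L) ^ j with hS
    have hdiff : hessProd α (N+1) f w - hessProd α (N+1) f u =
        Pw * (Aw - Au) + (Pw - Pu) * Au := by
      rw [hsplit, hsplit]; exact mul_sub_mul_decomp _ _ _ _
    have hAdiff : ‖Aw - Au‖ ≤ α * ρ * (1 + α * L) ^ N * ‖w - u‖ := by
      have heq : Aw - Au = -(α • (fderiv ℝ (gradient f) (innerPath α f N w) -
          fderiv ℝ (gradient f) (innerPath α f N u))) := by
        rw [hAw, hAu', smul_sub]; abel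
      rw [heq, norm_neg]
      refine le_trans (ContinuousLinearMap.opNorm_smul_le _ _) ?_
      rw [Real.norm_eq_abs, abs_of_pos hα]
      calc α * ‖fderiv ℝ (gradient f) (innerPath α f N w) -
              fderiv ℝ (gradient f) (innerPath α f N u)‖
          ≤ α * (ρ * ‖innerPath α f N w - innerPath α f N u‖) := by
            gcongr; exact hhess _ _
        _ ≤ α * (ρ * ((1 + α * L) ^ N * ‖w - u‖)) := by
            gcongr; exact innerPath_lip hα hL hgrad w u N
        _ = α * ρ * (1 + α * L) ^ N * ‖w - u‖ := by ring
    have hPw : ‖Pw‖ ≤ (1 + α * L) ^ N := hessProd_norm_le hα hL hgrad w N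
    have hAu : ‖Au‖ ≤ 1 + α * L := factor_norm_le hα hL hgrad _
    have t1 : ‖Pw * (Aw - Au)‖ ≤ (1 + α * L) ^ N * (α * ρ * (1 + α * L) ^ N * ‖w - u‖) :=
      le_trans (norm_mul_le _ _) (mul_le_mul hPw hAdiff (norm_nonneg _) (by positivity))
    have t2 : ‖(Pw - Pu) * Au‖ ≤
        ((1 + α * L) ^ (N - 1) * S * ‖w - u‖) * (1 + α * L) :=
      le_trans (norm_mul_le _ _) (mul_le_mul ih hAu (norm_nonneg _) (by positivity))
    have hsum0 : (0:ℝ) ≤ S := Finset.sum_nonneg fun j _ => by positivity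
    have t3 : ((1 + α * L) ^ (N - 1) * S * ‖w - u‖) * (1 + α * L) ≤
        (1 + α * L) ^ N * S * ‖w - u‖ := by
      rcases Nat.eq_zero_or_pos N with h | h
      · simp [hS, h]
      · have hNN : N - 1 + 1 = N := Nat.succ_pred_eq_of_pos h
        have hbm : (1 + α * L) ^ (N - 1) * (1 + α * L) = (1 + α * L) ^ N := by
          rw [← pow_succ, hNN]
        have : ((1 + α * L) ^ (N - 1) * S * ‖w - u‖) * (1 + α * L) =
            (1 + α * L) ^ N * S * ‖w - u‖ := by rw [← hbm]; ring
        exact le_of_eq this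
    calc ‖hessProd α (N+1) f w - hessProd α (N+1) f u‖
        ≤ ‖Pw * (Aw - Au)‖ + ‖(Pw - Pu) * Au‖ := by rw [hdiff]; exact norm_add_le _ _
      _ ≤ (1 + α * L) ^ N * (α * ρ * (1 + α * L) ^ N * ‖w - u‖) +
          (1 + α * L) ^ N * S * ‖w - u‖ := add_le_add t1 (le_trans t2 t3)
      _ = (1 + α * L) ^ ((N+1) - 1) *
            (∑ j ∈ Finset.range (N+1), α * ρ * (1 + α * L) ^ j) * ‖w - u‖ := by
          rw [Finset.sum_range_succ, ← hS]
          simp only [Nat.add_sub_cancel]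
          ring

end Aux2

section Aux3

set_option maxHeartbeats 800000

variable {d : ℕ} {α L ρ : ℝ} {f : EuclideanSpace ℝ (Fin d) → ℝ}

lemma metaGrad_sub_le (hα : 0 < α) (hL : 0 < L) (hρ : 0 < ρ) {N : ℕ} (hN : 1 ≤ N)
    (hgrad : ∀ w u, ‖gradient f w - gradient f u‖ ≤ L * ‖w - u‖)
    (hhess : ∀ w u, ‖fderiv ℝ (gradient f) w - fderiv ℝ (gradient f) u‖ ≤ ρ * ‖w - u‖)
    (w u : EuclideanSpace ℝ (Fin d)) :
    ‖metaGrad α N f f w - metaGrad α N f f u‖ ≤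
      ((1 + α * L) ^ (2 * N) * L +
        (((1 + α * L) ^ (N - 1) * α * ρ +
          (ρ / L) * (1 + α * L) ^ N * ((1 + α * L) ^ (N - 1) - 1)) * (1 + α * L) ^ N) *
            ‖gradient f w‖) * ‖w - u‖ := by
  have h0 : (0:ℝ) ≤ 1 + α * L := by positivity
  set gw := gradient f (innerPath α f N w) with hgw
  set gu := gradient f (innerPath α f N u) with hgu
  have hdec : metaGrad α N f f w - metaGrad α N f f u =
      hessProd α N f u (gw - gu) + (hessProd α N f w - hessProd α N f u) gw := by
    rw [map_sub, ContinuousLinearMap.sub_apply]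
    simp only [metaGrad, ← hgw, ← hgu]
    abel
  have t1 : ‖hessProd α N f u (gw - gu)‖ ≤ (1 + α * L) ^ (2 * N) * L * ‖w - u‖ := by
    calc ‖hessProd α N f u (gw - gu)‖ ≤ ‖hessProd α N f u‖ * ‖gw - gu‖ :=
          ContinuousLinearMap.le_opNorm _ _
      _ ≤ (1 + α * L) ^ N * (L * ((1 + α * L) ^ N * ‖w - u‖)) := by
          apply mul_le_mul (hessProd_norm_le hα hL hgrad u N) _ (norm_nonneg _) (by positivity)
          calc ‖gw - gu‖ ≤ L * ‖innerPath α f N w - innerPath α f N u‖ := hgrad _ _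
            _ ≤ L * ((1 + α * L) ^ N * ‖w - u‖) := by
                gcongr; exact innerPath_lip hα hL hgrad w u N
      _ = (1 + α * L) ^ (2 * N) * L * ‖w - u‖ := by
          rw [two_mul, pow_add]; ring
  have t2 : ‖(hessProd α N f w - hessProd α N f u) gw‖ ≤
      ((((1 + α * L) ^ (N - 1) * α * ρ +
          (ρ / L) * (1 + α * L) ^ N * ((1 + α * L) ^ (N - 1) - 1)) * (1 + α * L) ^ N) *
        ‖gradient f w‖) * ‖w - u‖ := by
    have hsum : (∑ j ∈ Finset.range N, α * ρ * (1 + α * L) ^ j) =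
        α * ρ * (((1 + α * L) ^ N - 1) / (α * L)) := by
      rw [← Finset.mul_sum, geom_sum_eq (by nlinarith) N]
      congr 1
      congr 1
      ring
    have hb : (1 + α * L) ^ N = (1 + α * L) ^ (N - 1) * (1 + α * L) := by
      rw [← pow_succ]
      congr 1
      omega
    have key : (1 + α * L) ^ (N - 1) * (α * ρ * (((1 + α * L) ^ N - 1) / (α * L))) *
          (1 + α * L) ^ N =
        ((1 + α * L) ^ (N - 1) * α * ρ +
          (ρ / L) * (1 + α * L) ^ N * ((1 + α * L) ^ (N - 1) - 1)) * (1 + α * L) ^ N := by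
      rw [hb]
      field_simp
      ring
    calc ‖(hessProd α N f w - hessProd α N f u) gw‖
        ≤ ‖hessProd α N f w - hessProd α N f u‖ * ‖gw‖ := ContinuousLinearMap.le_opNorm _ _
      _ ≤ ((1 + α * L) ^ (N - 1) *
            (∑ j ∈ Finset.range N, α * ρ * (1 + α * L) ^ j) * ‖w - u‖) *
          ((1 + α * L) ^ N * ‖gradient f w‖) := by
          apply mul_le_mul (hessProd_sub_le hα hL hρ hgrad hhess w u N)
            (grad_path_le hα hL hgrad w N) (norm_nonneg _)
          have : (0:ℝ) ≤ ∑ j ∈ Finset.range N, α * ρ * (1 + α * L) ^ j :=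
            Finset.sum_nonneg fun j _ => by positivity
          exact mul_nonneg (mul_nonneg (pow_nonneg h0 _) this) (norm_nonneg _)
      _ = ((1 + α * L) ^ (N - 1) * (α * ρ * (((1 + α * L) ^ N - 1) / (α * L))) *
            (1 + α * L) ^ N) * ‖gradient f w‖ * ‖w - u‖ := by rw [hsum]; ring
      _ = ((((1 + α * L) ^ (N - 1) * α * ρ +
              (ρ / L) * (1 + α * L) ^ N * ((1 + α * L) ^ (N - 1) - 1)) * (1 + α * L) ^ N) *
            ‖gradient f w‖) * ‖w - u‖ := by rw [key]
  calc ‖metaGrad α N f f w - metaGrad α N f f u‖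
      ≤ ‖hessProd α N f u (gw - gu)‖ + ‖(hessProd α N f w - hessProd α N f u) gw‖ := by
        rw [hdec]; exact norm_add_le _ _
    _ ≤ (1 + α * L) ^ (2 * N) * L * ‖w - u‖ +
        ((((1 + α * L) ^ (N - 1) * α * ρ +
            (ρ / L) * (1 + α * L) ^ N * ((1 + α * L) ^ (N - 1) - 1)) * (1 + α * L) ^ N) *
          ‖gradient f w‖) * ‖w - u‖ := add_le_add t1 t2
    _ = _ := by ring

end Aux3

theorem stmt6 {d : ℕ} (hd : 1 ≤ d) (α L ρ : ℝ) (hα : 0 < α) (hL : 0 < L) (hρ : 0 < ρ)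
    (N : ℕ) (hN : 1 ≤ N)
    {I : Type*} [MeasurableSpace I] (μ : Measure I) [IsProbabilityMeasure μ]
    (l : I → EuclideanSpace ℝ (Fin d) → ℝ)
    (hl : ∀ i, ContDiff ℝ 2 (l i))
    (hgrad : ∀ i, ∀ w u : EuclideanSpace ℝ (Fin d),
      ‖gradient (l i) w - gradient (l i) u‖ ≤ L * ‖w - u‖)
    (hhess : ∀ i, ∀ w u : EuclideanSpace ℝ (Fin d),
      ‖fderiv ℝ (gradient (l i)) w - fderiv ℝ (gradient (l i)) u‖ ≤ ρ * ‖w - u‖)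
    (hGint : ∀ w : EuclideanSpace ℝ (Fin d),
      Integrable (fun i => metaGrad α N (l i) (l i) w) μ)
    (hgint : ∀ w : EuclideanSpace ℝ (Fin d),
      Integrable (fun i => ‖gradient (l i) w‖) μ) :
    ∀ w u : EuclideanSpace ℝ (Fin d),
      ‖(∫ i, metaGrad α N (l i) (l i) w ∂μ) - ∫ i, metaGrad α N (l i) (l i) u ∂μ‖ ≤
        ((1 + α * L) ^ (2 * N) * L +
          (((1 + α * L) ^ (N - 1) * α * ρ +
            (ρ / L) * (1 + α * L) ^ N * ((1 + α * L) ^ (N - 1) - 1)) * (1 + α * L) ^ N) *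
            ∫ i, ‖gradient (l i) w‖ ∂μ) * ‖w - u‖ := by
  intro w u
  set C1 : ℝ := (1 + α * L) ^ (2 * N) * L with hC1
  set C2 : ℝ := ((1 + α * L) ^ (N - 1) * α * ρ +
      (ρ / L) * (1 + α * L) ^ N * ((1 + α * L) ^ (N - 1) - 1)) * (1 + α * L) ^ N with hC2
  have hbnd : ∀ i, ‖metaGrad α N (l i) (l i) w - metaGrad α N (l i) (l i) u‖ ≤
      (C1 + C2 * ‖gradient (l i) w‖) * ‖w - u‖ := fun i =>
    metaGrad_sub_le hα hL hρ hN (hgrad i) (hhess i) w u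
  have hbint : Integrable (fun i => (C1 + C2 * ‖gradient (l i) w‖) * ‖w - u‖) μ :=
    ((integrable_const C1).add ((hgint w).const_mul C2)).mul_const _
  rw [← integral_sub (hGint w) (hGint u)]
  calc ‖∫ i, (metaGrad α N (l i) (l i) w - metaGrad α N (l i) (l i) u) ∂μ‖
      ≤ ∫ i, (C1 + C2 * ‖gradient (l i) w‖) * ‖w - u‖ ∂μ :=
        norm_integral_le_of_norm_le hbint (Filter.Eventually.of_forall hbnd)
    _ = (∫ i, (C1 + C2 * ‖gradient (l i) w‖) ∂μ) * ‖w - u‖ := integral_mul_const _ _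
    _ = (C1 + C2 * ∫ i, ‖gradient (l i) w‖ ∂μ) * ‖w - u‖ := by
        rw [integral_add (integrable_const C1) ((hgint w).const_mul C2),
          integral_const, MeasureTheory.integral_const_mul]
        simp [measure_univ]
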